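/- arXiv:2105.06371 — 9 statements merged into one kernel-verified Lean document; each statement's English description precedes it below -/
import Mathlib

section
/- Let A be a real m×n matrix, let S ⊆ ℝⁿ, let x* ∈ S, set y = A x*, and define F(x) = ‖y − A x‖². Suppose A satisfies S-REC(S, γ, δ) with γ > 0, δ ≥ 0, and suppose ‖A v‖ ≤ ρ‖v‖ for all v ∈ ℝⁿ with ρ² ≤ γ. Fix a step size η with 1/(2γ) < η < 1/γ. Let x_t ∈ S, set w_t = x_t + η Aᵀ(y − A x_t), and let x_{t+1} ∈ S satisfy ‖x_{t+1} − w_t‖ ≤ ‖x* − w_t‖. Then F(x_{t+1}) ≤ (1/(ηγ) − 1)·F(x_t) + δ/(ηγ), and moreover 0 < 1/(ηγ) − 1 < 1. -/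
set_option maxHeartbeats 1000000


open Matrix

/-- one-step descent for PGD under S-REC, spectral-norm bound
    `‖Av‖ ≤ ρ‖v‖` with `ρ² ≤ γ`, and stepsize `1/(2γ) < η < 1/γ`. -/
theorem stmt_0 {m n : ℕ} (A : Matrix (Fin m) (Fin n) ℝ)
    (S : Set (EuclideanSpace ℝ (Fin n)))
    (xstar : EuclideanSpace ℝ (Fin n)) (hxstar : xstar ∈ S)
    (y : EuclideanSpace ℝ (Fin m)) (hy : y = A.toEuclideanLin xstar)
    (F : EuclideanSpace ℝ (Fin n) → ℝ)
    (hF : ∀ x, F x = ‖y - A.toEuclideanLin x‖ ^ 2)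
    (γ δ ρ η : ℝ) (hγ : 0 < γ) (hδ : 0 ≤ δ)
    (hSREC : ∀ x₁ ∈ S, ∀ x₂ ∈ S,
      γ * ‖x₁ - x₂‖ ^ 2 - δ ≤ ‖A.toEuclideanLin (x₁ - x₂)‖ ^ 2)
    (hρ : ∀ v : EuclideanSpace ℝ (Fin n), ‖A.toEuclideanLin v‖ ≤ ρ * ‖v‖)
    (hργ : ρ ^ 2 ≤ γ)
    (hη₁ : 1 / (2 * γ) < η) (hη₂ : η < 1 / γ)
    (xt : EuclideanSpace ℝ (Fin n)) (hxt : xt ∈ S)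
    (wt : EuclideanSpace ℝ (Fin n))
    (hwt : wt = xt + η • Aᵀ.toEuclideanLin (y - A.toEuclideanLin xt))
    (xt1 : EuclideanSpace ℝ (Fin n)) (hxt1 : xt1 ∈ S)
    (hproj : ‖xt1 - wt‖ ≤ ‖xstar - wt‖) :
    F xt1 ≤ (1 / (η * γ) - 1) * F xt + δ / (η * γ) ∧
      0 < 1 / (η * γ) - 1 ∧ 1 / (η * γ) - 1 < 1 := by
  set L := A.toEuclideanLin with hL
  have hη : 0 < η := lt_trans (by positivity) hη₁
  have hβ1 : η * γ < 1 := (lt_div_iff₀ hγ).mp hη₂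
  have hβ2 : 1 / 2 < η * γ := by
    rw [div_lt_iff₀ (by positivity)] at hη₁
    nlinarith
  have hβ0 : 0 < η * γ := by positivity
  set u := xstar - xt with hu
  set e := xstar - xt1 with he
  set a := ‖L e‖ with ha
  set b := ‖L u‖ with hb
  set p := (inner ℝ (L e) (L u) : ℝ) with hp
  have hLu : y - L xt = L u := by rw [hy, hu, map_sub]
  have hadj : Aᵀ.toEuclideanLin = LinearMap.adjoint L := by
    rw [hL, ← Matrix.toEuclideanLin_conjTranspose_eq_adjoint,
      Matrix.conjTranspose_eq_transpose_of_trivial]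
  have hxt1w : xt1 - wt = (u - e) - η • (LinearMap.adjoint L) (L u) := by
    rw [hwt, hLu, hadj, hu, he]
    abel
  have hxsw : xstar - wt = u - η • (LinearMap.adjoint L) (L u) := by
    rw [hwt, hLu, hadj, hu]
    abel
  have hproj2 : ‖xt1 - wt‖ ^ 2 ≤ ‖xstar - wt‖ ^ 2 := by
    have := norm_nonneg (xt1 - wt)
    nlinarith
  set T := η • (LinearMap.adjoint L) (L u) with hT
  have hi1 : (inner ℝ (u - e) T : ℝ) = η * (b ^ 2 - p) := by
    rw [hT, real_inner_smul_right, LinearMap.adjoint_inner_right, map_sub,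
      inner_sub_left, real_inner_self_eq_norm_sq, hp]
  have hi2 : (inner ℝ u T : ℝ) = η * b ^ 2 := by
    rw [hT, real_inner_smul_right, LinearMap.adjoint_inner_right,
      real_inner_self_eq_norm_sq]
  have hA : ‖(u - e) - T‖ ^ 2 = ‖u - e‖ ^ 2 - 2 * (η * (b ^ 2 - p)) + ‖T‖ ^ 2 := by
    rw [norm_sub_sq_real, hi1]
  have hB : ‖u - T‖ ^ 2 = ‖u‖ ^ 2 - 2 * (η * b ^ 2) + ‖T‖ ^ 2 := by
    rw [norm_sub_sq_real, hi2]
  rw [hxt1w, hxsw, hA, hB] at hproj2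
  -- cancelled projection inequality
  have hproj3 : ‖u - e‖ ^ 2 ≤ ‖u‖ ^ 2 - 2 * η * p := by linarith
  -- ‖L(u-e)‖² = b² - 2p + a²
  have hLue : ‖L (u - e)‖ ^ 2 = b ^ 2 - 2 * p + a ^ 2 := by
    rw [map_sub, @norm_sub_sq_real, real_inner_comm]
  -- lower bound on γ‖u - e‖² via ρ
  have hlow : b ^ 2 - 2 * p + a ^ 2 ≤ γ * ‖u - e‖ ^ 2 := by
    rw [← hLue]
    have h1 := hρ (u - e)
    have h2 := mul_self_le_mul_self (norm_nonneg (L (u - e))) h1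
    have h3 := mul_le_mul_of_nonneg_right hργ (sq_nonneg ‖u - e‖)
    nlinarith [h2, h3]
  -- upper bound on γ‖u‖² via S-REC
  have hup : γ * ‖u‖ ^ 2 ≤ b ^ 2 + δ := by
    have := hSREC xstar hxstar xt hxt
    rw [← hu] at this
    linarith
  have hkey : a ^ 2 ≤ δ + 2 * (1 - η * γ) * p := by
    nlinarith [mul_le_mul_of_nonneg_left hproj3 hγ.le]
  have hcs : p ≤ a * b := real_inner_le_norm (L e) (L u)
  have hfin : η * γ * a ^ 2 ≤ (1 - η * γ) * b ^ 2 + δ := by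
    nlinarith [sq_nonneg (a - b), mul_nonneg (by linarith : (0:ℝ) ≤ 1 - η * γ)
      (by linarith : 0 ≤ a * b - p)]
  refine ⟨?_, ?_, ?_⟩
  · have hF1 : F xt1 = a ^ 2 := by
      rw [hF, show y - L xt1 = L e by rw [hy, he, map_sub]]
    have hF2 : F xt = b ^ 2 := by rw [hF, hLu]
    rw [hF1, hF2,
      show (1 / (η * γ) - 1) * b ^ 2 + δ / (η * γ)
        = ((1 - η * γ) * b ^ 2 + δ) / (η * γ) by field_simp,
      le_div_iff₀ hβ0]
    linarith
  · have : 1 < 1 / (η * γ) := by rw [lt_div_iff₀ hβ0]; linarith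
    linarith
  · have : 1 / (η * γ) < 2 := by rw [div_lt_iff₀ hβ0]; linarith
    linarith
end

section
/- Let A be a real m×n matrix, let x* ∈ ℝⁿ, set y = A x*, define F(x) = ‖y − A x‖², and fix η > 0. Let x_t ∈ ℝⁿ, set w_t = x_t + η Aᵀ(y − A x_t), and suppose x_{t+1} ∈ ℝⁿ satisfies ‖x_{t+1} − w_t‖² ≤ ‖x* − w_t‖². Then 2⟨x_t − x_{t+1}, Aᵀ(y − A x_t)⟩ ≤ (1/η)‖x* − x_t‖² − (1/η)‖x_{t+1} − x_t‖² − 2 F(x_t). -/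
open Matrix

/-- inequality from the approximate-projection property
    `‖x_{t+1} − w_t‖² ≤ ‖x* − w_t‖²` with `w_t = x_t + η Aᵀ(y − A x_t)`. -/
theorem stmt_2 {m n : ℕ} (A : Matrix (Fin m) (Fin n) ℝ)
    (xstar : EuclideanSpace ℝ (Fin n))
    (y : EuclideanSpace ℝ (Fin m)) (hy : y = A.toEuclideanLin xstar)
    (F : EuclideanSpace ℝ (Fin n) → ℝ)
    (hF : ∀ x, F x = ‖y - A.toEuclideanLin x‖ ^ 2)
    (η : ℝ) (hη : 0 < η)
    (xt : EuclideanSpace ℝ (Fin n))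
    (wt : EuclideanSpace ℝ (Fin n))
    (hwt : wt = xt + η • Aᵀ.toEuclideanLin (y - A.toEuclideanLin xt))
    (xt1 : EuclideanSpace ℝ (Fin n))
    (hproj : ‖xt1 - wt‖ ^ 2 ≤ ‖xstar - wt‖ ^ 2) :
    2 * (inner ℝ (xt - xt1) (Aᵀ.toEuclideanLin (y - A.toEuclideanLin xt)) : ℝ) ≤
      (1 / η) * ‖xstar - xt‖ ^ 2 - (1 / η) * ‖xt1 - xt‖ ^ 2 - 2 * F xt := by
  set g := Aᵀ.toEuclideanLin (y - A.toEuclideanLin xt) with hg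
  have hAT : Aᵀ.toEuclideanLin = LinearMap.adjoint A.toEuclideanLin := by
    rw [← Matrix.toEuclideanLin_conjTranspose_eq_adjoint]
    congr 1
  have key : (inner ℝ (xstar - xt) g : ℝ) = F xt := by
    rw [hg, hAT, LinearMap.adjoint_inner_right, map_sub, ← hy, real_inner_self_eq_norm_sq, hF]
  -- expand the two squared norms
  have expand : ∀ a : EuclideanSpace ℝ (Fin n),
      ‖a - wt‖ ^ 2 = ‖a - xt‖ ^ 2 - 2 * η * (inner ℝ (a - xt) g : ℝ) + η ^ 2 * ‖g‖ ^ 2 := by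
    intro a
    have h1 : a - wt = (a - xt) - η • g := by rw [hwt]; abel
    rw [h1, norm_sub_sq_real, real_inner_smul_right, norm_smul]
    simp [Real.norm_eq_abs, mul_pow, sq_abs]
    ring
  rw [expand, expand] at hproj
  have h2 : (inner ℝ (xt - xt1) g : ℝ) = -(inner ℝ (xt1 - xt) g : ℝ) := by
    rw [← inner_neg_left]; congr 1; abel
  rw [h2, ← key]
  have goal2 : 2 * -(inner ℝ (xt1 - xt) g : ℝ) + 2 * (inner ℝ (xstar - xt) g : ℝ)
      ≤ (‖xstar - xt‖ ^ 2 - ‖xt1 - xt‖ ^ 2) / η := by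
    rw [le_div_iff₀ hη]
    nlinarith
  have heq : (1 / η) * ‖xstar - xt‖ ^ 2 - (1 / η) * ‖xt1 - xt‖ ^ 2
      = (‖xstar - xt‖ ^ 2 - ‖xt1 - xt‖ ^ 2) / η := by ring
  linarith [goal2, heq.ge, heq.le]
end

section
/- Let A be a real m×n matrix, let x* ∈ ℝⁿ, set y = A x*, define F(x) = ‖y − A x‖², and fix η > 0. Let x_t ∈ ℝⁿ, set w_t = x_t + η Aᵀ(y − A x_t), and suppose x_{t+1} ∈ ℝⁿ satisfies ‖x_{t+1} − w_t‖² ≤ ‖x* − w_t‖². Then F(x_{t+1}) ≤ (1/η)‖x* − x_t‖² − F(x_t) − ((1/η)‖x_{t+1} − x_t‖² − ‖A x_{t+1} − A x_t‖²). -/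
set_option maxHeartbeats 1000000

open Matrix

/-- the combined per-iteration bound on `F(x_{t+1})`. -/
theorem stmt_3 {m n : ℕ} (A : Matrix (Fin m) (Fin n) ℝ)
    (xstar : EuclideanSpace ℝ (Fin n))
    (y : EuclideanSpace ℝ (Fin m)) (hy : y = A.toEuclideanLin xstar)
    (F : EuclideanSpace ℝ (Fin n) → ℝ)
    (hF : ∀ x, F x = ‖y - A.toEuclideanLin x‖ ^ 2)
    (η : ℝ) (hη : 0 < η)
    (xt : EuclideanSpace ℝ (Fin n))
    (wt : EuclideanSpace ℝ (Fin n))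
    (hwt : wt = xt + η • Aᵀ.toEuclideanLin (y - A.toEuclideanLin xt))
    (xt1 : EuclideanSpace ℝ (Fin n))
    (hproj : ‖xt1 - wt‖ ^ 2 ≤ ‖xstar - wt‖ ^ 2) :
    F xt1 ≤ (1 / η) * ‖xstar - xt‖ ^ 2 - F xt -
      ((1 / η) * ‖xt1 - xt‖ ^ 2 - ‖A.toEuclideanLin xt1 - A.toEuclideanLin xt‖ ^ 2) := by
  set B := A.toEuclideanLin with hB
  have hT : Aᵀ.toEuclideanLin = LinearMap.adjoint B := by
    rw [hB, ← Matrix.toEuclideanLin_conjTranspose_eq_adjoint]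
    congr 1
  set r : EuclideanSpace ℝ (Fin m) := y - B xt with hr
  have hadj : ∀ u : EuclideanSpace ℝ (Fin n),
      inner ℝ (Aᵀ.toEuclideanLin r) u = (inner ℝ r (B u) : ℝ) := by
    intro u
    rw [hT, LinearMap.adjoint_inner_left]
  -- expand the squared norms in hproj
  have expand : ∀ u : EuclideanSpace ℝ (Fin n),
      ‖u - wt‖ ^ 2 = ‖u - xt‖ ^ 2 - 2 * η * inner ℝ r (B u - B xt)
        + η ^ 2 * ‖Aᵀ.toEuclideanLin r‖ ^ 2 := by
    intro u
    have : u - wt = (u - xt) - η • Aᵀ.toEuclideanLin r := by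
      rw [hwt]; abel
    rw [this, norm_sub_sq_real, inner_smul_right, norm_smul]
    have h1 : inner ℝ (u - xt) (Aᵀ.toEuclideanLin r) = (inner ℝ r (B u - B xt) : ℝ) := by
      rw [real_inner_comm, hadj, map_sub, inner_sub_right]
    rw [h1]
    simp [mul_pow, abs_of_pos hη]
    ring
  have h1 := expand xt1
  have h2 := expand xstar
  have hkey : ‖xt1 - xt‖ ^ 2 - 2 * η * inner ℝ r (B xt1 - B xt)
      ≤ ‖xstar - xt‖ ^ 2 - 2 * η * inner ℝ r (B xstar - B xt) := by
    nlinarith [hproj, h1, h2]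
  have hyr : (inner ℝ r (B xstar - B xt) : ℝ) = ‖r‖ ^ 2 := by
    have : B xstar - B xt = r := by rw [hr, hy]
    rw [this, real_inner_self_eq_norm_sq]
  rw [hyr] at hkey
  -- F xt1 expansion
  have hF1 : F xt1 = ‖r‖ ^ 2 - 2 * inner ℝ r (B xt1 - B xt) + ‖B xt1 - B xt‖ ^ 2 := by
    have : y - B xt1 = r - (B xt1 - B xt) := by rw [hr]; abel
    rw [hF, this, norm_sub_sq_real]
  have hFt : F xt = ‖r‖ ^ 2 := by rw [hF]
  rw [hF1, hFt]
  have hdiv : (1 / η) * (‖xt1 - xt‖ ^ 2 - 2 * η * inner ℝ r (B xt1 - B xt))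
      ≤ (1 / η) * (‖xstar - xt‖ ^ 2 - 2 * η * ‖r‖ ^ 2) := by
    apply mul_le_mul_of_nonneg_left hkey (by positivity)
  have e : ∀ a c : ℝ, (1/η) * (a - 2*η*c) = (1/η)*a - 2*c := by
    intro a c; field_simp
  rw [e, e] at hdiv
  linarith [hdiv]
end

section
/- Let A be a real m×n matrix, let S ⊆ ℝⁿ, let x* ∈ S, set y = A x*, and define F(x) = ‖y − A x‖². Suppose A satisfies S-REC(S, γ, δ) with γ > 0, δ ≥ 0, ‖A v‖ ≤ ρ‖v‖ for all v with ρ² ≤ γ, and fix η with 1/(2γ) < η < 1/γ. Let (x_t)_{t≥0} be a sequence in S with x_0 ∈ S such that, for every t, x_{t+1} ∈ S satisfies ‖x_{t+1} − (x_t + η Aᵀ(y − A x_t))‖ ≤ ‖x* − (x_t + η Aᵀ(y − A x_t))‖. Then, writing κ = 1/(ηγ) − 1 ∈ (0,1) and δ' = δ/(ηγ), for every T ≥ 0 one has F(x_T) ≤ κ^T · F(x_0) + δ'/(1 − κ). -/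
open Matrix

lemma adj_lemma {m n : ℕ} (A : Matrix (Fin m) (Fin n) ℝ)
    (v : EuclideanSpace ℝ (Fin m)) (u : EuclideanSpace ℝ (Fin n)) :
    (inner ℝ (Aᵀ.toEuclideanLin v) u : ℝ) = inner ℝ v (A.toEuclideanLin u) := by
  simp only [Matrix.toEuclideanLin_apply, PiLp.inner_apply, RCLike.inner_apply,
    conj_trivial, PiLp.toLp_apply,
    Matrix.mulVec, dotProduct, Matrix.transpose_apply,
    Finset.sum_mul, Finset.mul_sum]
  rw [Finset.sum_comm]
  apply Finset.sum_congr rfl; intro i _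
  apply Finset.sum_congr rfl; intro j _
  ring

lemma geom_rec (f : ℕ → ℝ) (κ c : ℝ) (hκ0 : 0 ≤ κ) (hκ1 : κ < 1) (hc : 0 ≤ c)
    (hrec : ∀ t, f (t + 1) ≤ κ * f t + c) :
    ∀ T, f T ≤ κ ^ T * f 0 + c / (1 - κ) := by
  have hne : (1 : ℝ) - κ ≠ 0 := by linarith
  have hdiv : 0 ≤ c / (1 - κ) := div_nonneg hc (by linarith)
  intro T
  induction T with
  | zero => simp only [pow_zero, one_mul]; linarith
  | succ T ih =>
      have h2 : κ * f T ≤ κ * (κ ^ T * f 0 + c / (1 - κ)) :=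
        mul_le_mul_of_nonneg_left ih hκ0
      have h3 : κ * (c / (1 - κ)) + c = c / (1 - κ) := by field_simp; ring
      calc f (T + 1) ≤ κ * (κ ^ T * f 0 + c / (1 - κ)) + c := by linarith [hrec T]
        _ = κ ^ (T + 1) * f 0 + (κ * (c / (1 - κ)) + c) := by ring
        _ = κ ^ (T + 1) * f 0 + c / (1 - κ) := by rw [h3]

lemma key_arith (γ δ η a b w2 lu c s : ℝ) (hγ : 0 < γ) (hδ : 0 ≤ δ) (hη : 0 < η)
    (hηγ1 : η * γ < 1) (hb : 0 ≤ b)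
    (hs2 : b - 2 * (η * c) + s ≤ w2 - 2 * (η * a) + s)
    (hSR : γ * w2 - δ ≤ a) (hLu : lu ≤ γ * b) :
    (η * γ) * (a - 2 * c + lu) ≤ (1 - η * γ) * a + δ := by
  nlinarith [mul_le_mul_of_nonneg_left hs2 hγ.le,
    mul_le_mul_of_nonneg_left hLu (by positivity : (0:ℝ) ≤ η * γ),
    mul_nonneg (sub_nonneg.mpr hηγ1.le) (mul_nonneg hγ.le hb)]

/-- geometric (linear) convergence of the PGD iterates up to a
    neighborhood: `F(x_T) ≤ κ^T F(x_0) + δ'/(1 − κ)` with `κ = 1/(ηγ) − 1` and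
    `δ' = δ/(ηγ)`. -/
theorem stmt_4 {m n : ℕ} (A : Matrix (Fin m) (Fin n) ℝ)
    (S : Set (EuclideanSpace ℝ (Fin n)))
    (xstar : EuclideanSpace ℝ (Fin n)) (hxstar : xstar ∈ S)
    (y : EuclideanSpace ℝ (Fin m)) (hy : y = A.toEuclideanLin xstar)
    (F : EuclideanSpace ℝ (Fin n) → ℝ)
    (hF : ∀ x, F x = ‖y - A.toEuclideanLin x‖ ^ 2)
    (γ δ ρ η : ℝ) (hγ : 0 < γ) (hδ : 0 ≤ δ)
    (hSREC : ∀ x₁ ∈ S, ∀ x₂ ∈ S,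
      γ * ‖x₁ - x₂‖ ^ 2 - δ ≤ ‖A.toEuclideanLin (x₁ - x₂)‖ ^ 2)
    (hρ : ∀ v : EuclideanSpace ℝ (Fin n), ‖A.toEuclideanLin v‖ ≤ ρ * ‖v‖)
    (hργ : ρ ^ 2 ≤ γ)
    (hη₁ : 1 / (2 * γ) < η) (hη₂ : η < 1 / γ)
    (x : ℕ → EuclideanSpace ℝ (Fin n)) (hxS : ∀ t, x t ∈ S)
    (hstep : ∀ t, ‖x (t + 1) - (x t + η • Aᵀ.toEuclideanLin (y - A.toEuclideanLin (x t)))‖ ≤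
      ‖xstar - (x t + η • Aᵀ.toEuclideanLin (y - A.toEuclideanLin (x t)))‖) :
    ∀ T : ℕ, F (x T) ≤ (1 / (η * γ) - 1) ^ T * F (x 0) +
      (δ / (η * γ)) / (1 - (1 / (η * γ) - 1)) := by
  set L := A.toEuclideanLin with hL
  have hη : 0 < η := lt_trans (by positivity) hη₁
  have hηγ1 : η * γ < 1 := (lt_div_iff₀ hγ).mp hη₂
  have h2ηγ : 1 < 2 * (η * γ) := by
    have := (div_lt_iff₀ (by positivity : (0:ℝ) < 2 * γ)).mp hη₁
    linarith
  have hηγpos : 0 < η * γ := by positivity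
  have hκ0 : 0 ≤ 1 / (η * γ) - 1 := by
    rw [sub_nonneg, le_div_iff₀ hηγpos]; linarith
  have hκ1 : 1 / (η * γ) - 1 < 1 := by
    rw [sub_lt_iff_lt_add, div_lt_iff₀ hηγpos]; linarith
  have hrec : ∀ t, F (x (t + 1)) ≤ (1 / (η * γ) - 1) * F (x t) + δ / (η * γ) := by
    intro t
    set e : EuclideanSpace ℝ (Fin m) := y - L (x t) with he
    set u : EuclideanSpace ℝ (Fin n) := x (t + 1) - x t with hu
    set w : EuclideanSpace ℝ (Fin n) := xstar - x t with hw
    have hLw : L w = e := by rw [hw, map_sub, ← hy, he]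
    have hadj2 : ∀ u' : EuclideanSpace ℝ (Fin n),
        (inner ℝ u' (Aᵀ.toEuclideanLin e) : ℝ) = inner ℝ e (L u') := by
      intro u'; rw [real_inner_comm, adj_lemma]
    have hs2 : ‖u - η • Aᵀ.toEuclideanLin e‖ ^ 2 ≤ ‖w - η • Aᵀ.toEuclideanLin e‖ ^ 2 := by
      have h1 : x (t + 1) - (x t + η • Aᵀ.toEuclideanLin e) = u - η • Aᵀ.toEuclideanLin e := by
        rw [hu]; abel
      have h2 : xstar - (x t + η • Aᵀ.toEuclideanLin e) = w - η • Aᵀ.toEuclideanLin e := by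
        rw [hw]; abel
      rw [← h1, ← h2]
      exact pow_le_pow_left₀ (norm_nonneg _) (hstep t) 2
    rw [norm_sub_sq_real u (η • Aᵀ.toEuclideanLin e), norm_sub_sq_real w (η • Aᵀ.toEuclideanLin e),
      real_inner_smul_right, real_inner_smul_right,
      hadj2 u, hadj2 w, hLw, real_inner_self_eq_norm_sq] at hs2
    have hSR := hSREC xstar hxstar (x t) (hxS t)
    rw [← hw, hLw] at hSR
    have hLu : ‖L u‖ ^ 2 ≤ γ * ‖u‖ ^ 2 := by
      have h1 : ‖L u‖ ^ 2 ≤ (ρ * ‖u‖) ^ 2 := pow_le_pow_left₀ (norm_nonneg _) (hρ u) 2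
      nlinarith [mul_le_mul_of_nonneg_right hργ (sq_nonneg ‖u‖)]
    have hFt1 : F (x (t + 1)) = ‖e‖ ^ 2 - 2 * (inner ℝ e (L u) : ℝ) + ‖L u‖ ^ 2 := by
      rw [hF]
      have hrw : y - L (x (t + 1)) = e - L u := by rw [he, hu, map_sub]; abel
      rw [hrw, norm_sub_sq_real]
    have hFt : F (x t) = ‖e‖ ^ 2 := by rw [hF, ← he]
    rw [hFt1, hFt]
    have hkey : (η * γ) * (‖e‖ ^ 2 - 2 * (inner ℝ e (L u) : ℝ) + ‖L u‖ ^ 2) ≤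
        (1 - η * γ) * ‖e‖ ^ 2 + δ := by
      exact key_arith γ δ η (‖e‖ ^ 2) (‖u‖ ^ 2) (‖w‖ ^ 2) (‖L u‖ ^ 2)
        (inner ℝ e (L u)) (‖η • Aᵀ.toEuclideanLin e‖ ^ 2) hγ hδ hη hηγ1
        (sq_nonneg ‖u‖) hs2 hSR hLu
    have h2 : ‖e‖ ^ 2 - 2 * (inner ℝ e (L u) : ℝ) + ‖L u‖ ^ 2 ≤
        ((1 - η * γ) * ‖e‖ ^ 2 + δ) / (η * γ) :=
      (le_div_iff₀ hηγpos).mpr (by linarith [hkey])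
    have h3 : ((1 - η * γ) * ‖e‖ ^ 2 + δ) / (η * γ) =
        (1 / (η * γ) - 1) * ‖e‖ ^ 2 + δ / (η * γ) := by
      field_simp
    linarith [h2, h3.le, h3.ge]
  exact geom_rec (fun t => F (x t)) (1 / (η * γ) - 1) (δ / (η * γ)) hκ0 hκ1
    (by positivity) hrec
end

section
/- Let S ⊆ ℝⁿ, let F : ℝⁿ → ℝ be differentiable with gradient ∇F, and suppose F satisfies RSC with constant α > 0 and RSS with constant β ≥ α over S. Let x* ∈ S with ‖∇F(x*)‖ ≤ γ, suppose ‖x − x'‖ ≤ Δ for all x, x' ∈ S, and let ε > 0. Let x_t ∈ S, set w_t = x_t − (1/β)∇F(x_t), and let x_{t+1} ∈ S satisfy ‖x_{t+1} − w_t‖² ≤ ‖x* − w_t‖² + ε. Then F(x_{t+1}) − F(x*) ≤ (β/α − 1)·(F(x_t) − F(x*)) + ((β − α)/α)·γΔ + βε/2. -/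
/-- one step of ε-PGD under RSC/RSS yields linear decrease of the
    objective gap, up to the additive error `((β−α)/α)γΔ + βε/2`. -/
theorem stmt_5 {n : ℕ} (S : Set (EuclideanSpace ℝ (Fin n)))
    (F : EuclideanSpace ℝ (Fin n) → ℝ)
    (gradF : EuclideanSpace ℝ (Fin n) → EuclideanSpace ℝ (Fin n))
    (hgrad : ∀ x, HasGradientAt F (gradF x) x)
    (α β γ Δ ε : ℝ) (hα : 0 < α) (hβ : α ≤ β)
    (hRSC : ∀ x ∈ S, ∀ y ∈ S,
      α / 2 * ‖x - y‖ ^ 2 ≤ F y - F x - (inner ℝ (gradF x) (y - x) : ℝ))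
    (hRSS : ∀ x ∈ S, ∀ y ∈ S,
      F y - F x - (inner ℝ (gradF x) (y - x) : ℝ) ≤ β / 2 * ‖x - y‖ ^ 2)
    (xstar : EuclideanSpace ℝ (Fin n)) (hxstar : xstar ∈ S)
    (hγ : ‖gradF xstar‖ ≤ γ)
    (hΔ : ∀ x ∈ S, ∀ x' ∈ S, ‖x - x'‖ ≤ Δ)
    (hε : 0 < ε)
    (xt : EuclideanSpace ℝ (Fin n)) (hxt : xt ∈ S)
    (wt : EuclideanSpace ℝ (Fin n)) (hwt : wt = xt - (1 / β) • gradF xt)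
    (xt1 : EuclideanSpace ℝ (Fin n)) (hxt1 : xt1 ∈ S)
    (hproj : ‖xt1 - wt‖ ^ 2 ≤ ‖xstar - wt‖ ^ 2 + ε) :
    F xt1 - F xstar ≤ (β / α - 1) * (F xt - F xstar) +
      ((β - α) / α) * (γ * Δ) + β * ε / 2 := by
  have hβ0 : (0:ℝ) < β := lt_of_lt_of_le hα hβ
  set g := gradF xt with hg
  -- key identity: β/2 ‖y - wt‖² = β/2 ‖y - xt‖² + ⟨g, y - xt⟩ + ‖g‖²/(2β)
  have key : ∀ y : EuclideanSpace ℝ (Fin n),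
      β / 2 * ‖y - wt‖ ^ 2 =
        β / 2 * ‖y - xt‖ ^ 2 + (inner ℝ g (y - xt) : ℝ) + 1 / (2 * β) * ‖g‖ ^ 2 := by
    intro y
    have h1 : y - wt = (y - xt) + (1 / β) • g := by rw [hwt]; abel
    rw [h1, norm_add_sq_real, real_inner_smul_right, real_inner_comm, norm_smul]
    have hn : ‖(1/β)‖ = 1/β := abs_of_pos (by positivity)
    rw [hn]
    field_simp
  have hhalf : (0:ℝ) ≤ β / 2 := by positivity
  have h' := mul_le_mul_of_nonneg_left hproj hhalf
  rw [mul_add] at h'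
  have k1 := key xt1
  have k2 := key xstar
  -- hp : β/2‖xt1-xt‖² + ⟨g,xt1-xt⟩ ≤ β/2‖xstar-xt‖² + ⟨g,xstar-xt⟩ + βε/2
  have hp : β / 2 * ‖xt1 - xt‖ ^ 2 + (inner ℝ g (xt1 - xt) : ℝ) ≤
      β / 2 * ‖xstar - xt‖ ^ 2 + (inner ℝ g (xstar - xt) : ℝ) + β * ε / 2 := by
    linarith
  have h1 := hRSS xt hxt xt1 hxt1
  have h2 := hRSC xt hxt xstar hxstar
  have h3 := hRSC xstar hxstar xt hxt
  rw [norm_sub_rev xt xt1] at h1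
  rw [norm_sub_rev xt xstar] at h2
  -- Cauchy-Schwarz bound
  have hcs : -(γ * Δ) ≤ (inner ℝ (gradF xstar) (xt - xstar) : ℝ) := by
    have hab := abs_real_inner_le_norm (gradF xstar) (xt - xstar)
    have hd := hΔ xt hxt xstar hxstar
    have hγ0 : (0:ℝ) ≤ γ := le_trans (norm_nonneg _) hγ
    have hmul : ‖gradF xstar‖ * ‖xt - xstar‖ ≤ γ * Δ :=
      mul_le_mul hγ hd (norm_nonneg _) hγ0
    have := neg_abs_le (inner ℝ (gradF xstar) (xt - xstar) : ℝ)
    linarith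
  -- step1 : F xt1 - F xstar ≤ (β-α)/2 ‖xstar-xt‖² + βε/2
  have step1 : F xt1 - F xstar ≤ (β - α) / 2 * ‖xstar - xt‖ ^ 2 + β * ε / 2 := by
    linarith
  -- bound on ‖xstar - xt‖² : α/2 b ≤ F xt - F xstar + γΔ
  have h3' : α / 2 * ‖xstar - xt‖ ^ 2 ≤ F xt - F xstar + γ * Δ := by linarith
  have hc0 : (0:ℝ) ≤ (β - α) / α := div_nonneg (by linarith) hα.le
  have h5 := mul_le_mul_of_nonneg_left h3' hc0
  have hc : (β - α) / α * α = β - α := div_mul_cancel₀ _ hα.ne'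
  have h6 : (β - α) / α * (α / 2 * ‖xstar - xt‖ ^ 2) = (β - α) / 2 * ‖xstar - xt‖ ^ 2 := by
    rw [show (β - α) / α * (α / 2 * ‖xstar - xt‖ ^ 2)
        = ((β - α) / α * α) * (‖xstar - xt‖ ^ 2 / 2) by ring, hc]; ring
  have h7 : β / α - 1 = (β - α) / α := by field_simp
  rw [h7, ← mul_add ((β - α) / α)]
  rw [h6] at h5
  linarith [mul_add ((β - α) / α) (F xt - F xstar) (γ * Δ)]
end

section
/- Let S ⊆ ℝⁿ, let F : ℝⁿ → ℝ be differentiable with gradient ∇F, and suppose F satisfies RSS with constant β > 0 over S. Let x*, x_t ∈ S, let ε ≥ 0, set w_t = x_t − (1/β)∇F(x_t), and let x_{t+1} ∈ S satisfy ‖x_{t+1} − w_t‖² ≤ ‖x* − w_t‖² + ε. Then F(x_{t+1}) − F(x_t) ≤ (β/2)‖x* − x_t‖² + ⟨∇F(x_t), x* − x_t⟩ + βε/2. -/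
/-- under RSS and the ε-approximate projection property,
    `F(x_{t+1}) − F(x_t) ≤ (β/2)‖x* − x_t‖² + ⟨∇F(x_t), x* − x_t⟩ + βε/2`. -/
theorem stmt_7 {n : ℕ} (S : Set (EuclideanSpace ℝ (Fin n)))
    (F : EuclideanSpace ℝ (Fin n) → ℝ)
    (gradF : EuclideanSpace ℝ (Fin n) → EuclideanSpace ℝ (Fin n))
    (hgrad : ∀ x, HasGradientAt F (gradF x) x)
    (β : ℝ) (hβ : 0 < β)
    (hRSS : ∀ x ∈ S, ∀ y ∈ S,
      F y - F x - (inner ℝ (gradF x) (y - x) : ℝ) ≤ β / 2 * ‖x - y‖ ^ 2)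
    (xstar : EuclideanSpace ℝ (Fin n)) (hxstar : xstar ∈ S)
    (xt : EuclideanSpace ℝ (Fin n)) (hxt : xt ∈ S)
    (ε : ℝ) (hε : 0 ≤ ε)
    (wt : EuclideanSpace ℝ (Fin n)) (hwt : wt = xt - (1 / β) • gradF xt)
    (xt1 : EuclideanSpace ℝ (Fin n)) (hxt1 : xt1 ∈ S)
    (hproj : ‖xt1 - wt‖ ^ 2 ≤ ‖xstar - wt‖ ^ 2 + ε) :
    F xt1 - F xt ≤ β / 2 * ‖xstar - xt‖ ^ 2 +
      (inner ℝ (gradF xt) (xstar - xt) : ℝ) + β * ε / 2 := by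
  have key : ∀ y : EuclideanSpace ℝ (Fin n),
      (inner ℝ (gradF xt) (y - xt) : ℝ) + β / 2 * ‖y - xt‖ ^ 2 =
      β / 2 * ‖y - wt‖ ^ 2 - ‖gradF xt‖ ^ 2 / (2 * β) := by
    intro y
    have h1 : y - wt = (y - xt) + (1 / β) • gradF xt := by rw [hwt]; abel
    rw [h1, norm_add_sq_real, real_inner_smul_right, norm_smul, real_inner_comm]
    simp [abs_of_pos hβ]
    field_simp
    ring
  have hrss := hRSS xt hxt xt1 hxt1
  rw [norm_sub_rev] at hrss
  have h2 : F xt1 - F xt ≤ (inner ℝ (gradF xt) (xt1 - xt) : ℝ) + β / 2 * ‖xt1 - xt‖ ^ 2 := by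
    linarith
  rw [key xt1] at h2
  have h3 : β / 2 * ‖xt1 - wt‖ ^ 2 ≤ β / 2 * (‖xstar - wt‖ ^ 2 + ε) := by
    apply mul_le_mul_of_nonneg_left hproj (by linarith)
  have h4 := key xstar
  nlinarith [h4]
end

section
/- Let S ⊆ ℝⁿ, let F : ℝⁿ → ℝ be differentiable with gradient ∇F satisfying RSC with constant α > 0 and RSS with constant β over S, with 1 ≤ β/α < 2. Let x* ∈ S with ‖∇F(x*)‖ ≤ γ, suppose ‖x − x'‖ ≤ Δ for all x, x' ∈ S, suppose F(x) ≥ F(x*) for all x ∈ S, and let ε > 0. Let (x_t)_{t≥0} be a sequence in S such that for every t, x_{t+1} ∈ S satisfies ‖x_{t+1} − (x_t − (1/β)∇F(x_t))‖² ≤ ‖x* − (x_t − (1/β)∇F(x_t))‖² + ε. Then, with ρ = β/α − 1 ∈ [0,1) and c = ((β − α)/α)·γΔ + βε/2, for every T ≥ 1: F(x_T) − F(x*) ≤ ρ^T·(F(x_0) − F(x*)) + c/(1 − ρ). -/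
/-- linear convergence of ε-PGD under RSC/RSS with `1 ≤ β/α < 2`:
    `F(x_T) − F(x*) ≤ ρ^T (F(x_0) − F(x*)) + c/(1 − ρ)` for `T ≥ 1`, where
    `ρ = β/α − 1` and `c = ((β−α)/α)γΔ + βε/2`. -/
theorem stmt_9 {n : ℕ} (S : Set (EuclideanSpace ℝ (Fin n)))
    (F : EuclideanSpace ℝ (Fin n) → ℝ)
    (gradF : EuclideanSpace ℝ (Fin n) → EuclideanSpace ℝ (Fin n))
    (hgrad : ∀ x, HasGradientAt F (gradF x) x)
    (α β γ Δ ε : ℝ) (hα : 0 < α) (hβ : α ≤ β) (hβα : β / α < 2)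
    (hRSC : ∀ x ∈ S, ∀ y ∈ S,
      α / 2 * ‖x - y‖ ^ 2 ≤ F y - F x - (inner ℝ (gradF x) (y - x) : ℝ))
    (hRSS : ∀ x ∈ S, ∀ y ∈ S,
      F y - F x - (inner ℝ (gradF x) (y - x) : ℝ) ≤ β / 2 * ‖x - y‖ ^ 2)
    (xstar : EuclideanSpace ℝ (Fin n)) (hxstar : xstar ∈ S)
    (hγ : ‖gradF xstar‖ ≤ γ)
    (hΔ : ∀ x ∈ S, ∀ x' ∈ S, ‖x - x'‖ ≤ Δ)
    (hmin : ∀ x ∈ S, F xstar ≤ F x)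
    (hε : 0 < ε)
    (x : ℕ → EuclideanSpace ℝ (Fin n)) (hxS : ∀ t, x t ∈ S)
    (hstep : ∀ t, ‖x (t + 1) - (x t - (1 / β) • gradF (x t))‖ ^ 2 ≤
      ‖xstar - (x t - (1 / β) • gradF (x t))‖ ^ 2 + ε) :
    ∀ T : ℕ, 1 ≤ T →
      F (x T) - F xstar ≤ (β / α - 1) ^ T * (F (x 0) - F xstar) +
        (((β - α) / α) * (γ * Δ) + β * ε / 2) / (1 - (β / α - 1)) := by
  have hβ0 : 0 < β := lt_of_lt_of_le hα hβ
  set ρ : ℝ := β / α - 1 with hρdef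
  set c : ℝ := ((β - α) / α) * (γ * Δ) + β * ε / 2 with hcdef
  clear_value ρ c
  have hρeq : ρ = (β - α) / α := by rw [hρdef]; field_simp
  have hρ0 : 0 ≤ ρ := by rw [hρeq]; exact div_nonneg (by linarith) hα.le
  have hρ1 : ρ < 1 := by rw [hρdef]; linarith
  have hγ0 : 0 ≤ γ := le_trans (norm_nonneg _) hγ
  have hΔ0 : 0 ≤ Δ := le_trans (norm_nonneg _) (hΔ xstar hxstar xstar hxstar)
  have hc0 : 0 ≤ c := by
    rw [hcdef, ← hρeq]
    have : 0 ≤ ρ * (γ * Δ) := mul_nonneg hρ0 (mul_nonneg hγ0 hΔ0)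
    nlinarith [mul_pos hβ0 hε]
  have key : ∀ t, F (x (t + 1)) - F xstar ≤ ρ * (F (x t) - F xstar) + c := by
    intro t
    have e1 : x (t + 1) - (x t - (1 / β) • gradF (x t)) =
        (x (t + 1) - x t) + (1 / β) • gradF (x t) := by abel
    have e2 : xstar - (x t - (1 / β) • gradF (x t)) =
        (xstar - x t) + (1 / β) • gradF (x t) := by abel
    have h2 := hstep t
    rw [e1, e2, norm_add_sq_real, norm_add_sq_real,
      real_inner_smul_right, real_inner_smul_right] at h2
    -- h2 : ‖u-z‖² + 2*((1/β)*⟨u-z,g⟩) + E ≤ ‖s-z‖² + 2*((1/β)*⟨s-z,g⟩) + E + ε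
    have h2' : β / 2 * ‖x (t + 1) - x t‖ ^ 2 + (inner ℝ (x (t + 1) - x t) (gradF (x t)) : ℝ) ≤
        β / 2 * ‖xstar - x t‖ ^ 2 + (inner ℝ (xstar - x t) (gradF (x t)) : ℝ) + β * ε / 2 := by
      have hβne : β ≠ 0 := ne_of_gt hβ0
      have h := mul_le_mul_of_nonneg_left h2 (le_of_lt (half_pos hβ0))
      have l : β / 2 * (‖x (t + 1) - x t‖ ^ 2 +
          2 * (1 / β * (inner ℝ (x (t + 1) - x t) (gradF (x t)) : ℝ)) +
          ‖(1 / β) • gradF (x t)‖ ^ 2) =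
          β / 2 * ‖x (t + 1) - x t‖ ^ 2 + (inner ℝ (x (t + 1) - x t) (gradF (x t)) : ℝ) +
          β / 2 * ‖(1 / β) • gradF (x t)‖ ^ 2 := by field_simp
      have r : β / 2 * (‖xstar - x t‖ ^ 2 +
          2 * (1 / β * (inner ℝ (xstar - x t) (gradF (x t)) : ℝ)) +
          ‖(1 / β) • gradF (x t)‖ ^ 2 + ε) =
          β / 2 * ‖xstar - x t‖ ^ 2 + (inner ℝ (xstar - x t) (gradF (x t)) : ℝ) +
          β / 2 * ‖(1 / β) • gradF (x t)‖ ^ 2 + β * ε / 2 := by field_simp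
      rw [l, r] at h
      linarith
    have h1 := hRSS (x t) (hxS t) (x (t + 1)) (hxS (t + 1))
    have h3 := hRSC (x t) (hxS t) xstar hxstar
    have h4 := hRSC xstar hxstar (x t) (hxS t)
    have h5 : -(γ * Δ) ≤ (inner ℝ (gradF xstar) (x t - xstar) : ℝ) := by
      have habs := abs_real_inner_le_norm (gradF xstar) (x t - xstar)
      have hb : ‖gradF xstar‖ * ‖x t - xstar‖ ≤ γ * Δ :=
        mul_le_mul hγ (hΔ (x t) (hxS t) xstar hxstar) (norm_nonneg _) hγ0
      have := neg_abs_le ((inner ℝ (gradF xstar) (x t - xstar) : ℝ))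
      linarith [this, habs.trans hb]
    -- rewrite inner symmetry and norm_sub_rev to match
    rw [real_inner_comm] at h1 h3
    have hn1 : ‖x t - x (t + 1)‖ = ‖x (t + 1) - x t‖ := norm_sub_rev _ _
    have hn2 : ‖x t - xstar‖ = ‖xstar - x t‖ := norm_sub_rev _ _
    rw [hn1] at h1
    rw [hn2] at h3
    -- stepA : F u ≤ F s + (β-α)/2 * C + βε/2
    have stepA : F (x (t + 1)) ≤ F xstar + (β - α) / 2 * ‖xstar - x t‖ ^ 2 + β * ε / 2 := by
      linarith
    -- stepB : α * C ≤ 2 (F z - F s) + 2 γΔ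
    have stepB : α * ‖xstar - x t‖ ^ 2 ≤ 2 * (F (x t) - F xstar) + 2 * (γ * Δ) := by
      linarith
    have hmul := mul_le_mul_of_nonneg_left stepB
      (div_nonneg (by linarith : (0:ℝ) ≤ β - α) (by linarith : (0:ℝ) ≤ 2 * α))
    have hid : (β - α) / (2 * α) * (α * ‖xstar - x t‖ ^ 2) =
        (β - α) / 2 * ‖xstar - x t‖ ^ 2 := by field_simp
    have hid2 : (β - α) / (2 * α) * (2 * (F (x t) - F xstar) + 2 * (γ * Δ)) =
        (β - α) / α * (F (x t) - F xstar) + (β - α) / α * (γ * Δ) := by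
      field_simp
    rw [hid, hid2] at hmul
    rw [hcdef, hρeq]
    linarith
  have main : ∀ T, F (x T) - F xstar ≤ ρ ^ T * (F (x 0) - F xstar) + c / (1 - ρ) := by
    intro T
    induction T with
    | zero =>
      simp only [pow_zero, one_mul]
      have : 0 ≤ c / (1 - ρ) := div_nonneg hc0 (by linarith)
      linarith
    | succ T ih =>
      have h := key T
      have hmul := mul_le_mul_of_nonneg_left ih hρ0
      have hid : ρ * (ρ ^ T * (F (x 0) - F xstar) + c / (1 - ρ)) + c =
          ρ ^ (T + 1) * (F (x 0) - F xstar) + c / (1 - ρ) := by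
        have h1ρ : 1 - ρ ≠ 0 := by intro h; linarith [hρ1]
        field_simp
        ring
      calc F (x (T + 1)) - F xstar ≤ ρ * (F (x T) - F xstar) + c := h
        _ ≤ ρ * (ρ ^ T * (F (x 0) - F xstar) + c / (1 - ρ)) + c := by linarith
        _ = ρ ^ (T + 1) * (F (x 0) - F xstar) + c / (1 - ρ) := hid
  intro T _
  exact main T
end

section
/- Let U, V ⊆ ℝⁿ be μ-incoherent with 0 < μ < 1. Then for all u, u' ∈ U and v, v' ∈ V: |⟨u − u', v − v'⟩| ≤ (μ/(2(1 − μ)))·‖(u + v) − (u' + v')‖². -/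
/-- for μ-incoherent sets,
    `|⟨u − u', v − v'⟩| ≤ (μ/(2(1−μ)))‖(u+v) − (u'+v')‖²`. -/
theorem stmt_11 {n : ℕ} (U V : Set (EuclideanSpace ℝ (Fin n)))
    (μ : ℝ) (hμ0 : 0 < μ) (hμ1 : μ < 1)
    (hinc : ∀ u ∈ U, ∀ u' ∈ U, ∀ v ∈ V, ∀ v' ∈ V,
      |(inner ℝ (u - u') (v - v') : ℝ)| ≤ μ * ‖u - u'‖ * ‖v - v'‖) :
    ∀ u ∈ U, ∀ u' ∈ U, ∀ v ∈ V, ∀ v' ∈ V,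
      |(inner ℝ (u - u') (v - v') : ℝ)| ≤
        μ / (2 * (1 - μ)) * ‖(u + v) - (u' + v')‖ ^ 2 := by
  intro u hu u' hu' v hv v' hv'
  have h := hinc u hu u' hu' v hv v' hv'
  set a := u - u'
  set b := v - v'
  have hab : (u + v) - (u' + v') = a + b := by show u + v - (u' + v') = u - u' + (v - v'); abel
  rw [hab]
  have hsq : ‖a + b‖ ^ 2 = ‖a‖ ^ 2 + 2 * (inner ℝ a b : ℝ) + ‖b‖ ^ 2 := by
    rw [norm_add_sq_real]
  have hinner : |(inner ℝ a b : ℝ)| ≤ μ * ‖a‖ * ‖b‖ := h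
  have habs := abs_le.mp hinner
  have h1 : 2 * (1 - μ) * ‖a‖ * ‖b‖ ≤ ‖a + b‖ ^ 2 := by
    nlinarith [sq_nonneg (‖a‖ - ‖b‖), norm_nonneg a, norm_nonneg b]
  have hpos : 0 < 2 * (1 - μ) := by linarith
  rw [div_mul_eq_mul_div, le_div_iff₀ hpos]
  calc |(inner ℝ a b : ℝ)| * (2 * (1 - μ)) ≤ (μ * ‖a‖ * ‖b‖) * (2 * (1 - μ)) := by
        apply mul_le_mul_of_nonneg_right hinner hpos.le
    _ ≤ μ * ‖a + b‖ ^ 2 := by nlinarith [norm_nonneg a, norm_nonneg b]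
end

section
/- Let U, V ⊆ ℝⁿ be μ-incoherent with 0 < μ < 1. Then for all u, u' ∈ U and v, v' ∈ V: ‖u − u'‖² + ‖v − v'‖² ≤ (1/(1 − μ))·‖(u + v) − (u' + v')‖². -/
/-- for μ-incoherent sets,
    `‖u − u'‖² + ‖v − v'‖² ≤ (1/(1−μ))‖(u+v) − (u'+v')‖²`. -/
theorem stmt_12 {n : ℕ} (U V : Set (EuclideanSpace ℝ (Fin n)))
    (μ : ℝ) (hμ0 : 0 < μ) (hμ1 : μ < 1)
    (hinc : ∀ u ∈ U, ∀ u' ∈ U, ∀ v ∈ V, ∀ v' ∈ V,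
      |(inner ℝ (u - u') (v - v') : ℝ)| ≤ μ * ‖u - u'‖ * ‖v - v'‖) :
    ∀ u ∈ U, ∀ u' ∈ U, ∀ v ∈ V, ∀ v' ∈ V,
      ‖u - u'‖ ^ 2 + ‖v - v'‖ ^ 2 ≤
        1 / (1 - μ) * ‖(u + v) - (u' + v')‖ ^ 2 := by
  intro u hu u' hu' v hv v' hv'
  have h1μ : 0 < 1 - μ := by linarith
  set a := u - u'
  set b := v - v'
  have hab : (u + v) - (u' + v') = a + b := by
    simp only [a, b]; abel
  rw [hab]
  have hexp : ‖a + b‖ ^ 2 = ‖a‖ ^ 2 + 2 * inner ℝ a b + ‖b‖ ^ 2 := by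
    rw [@norm_add_sq_real]
  have hinner := hinc u hu u' hu' v hv v' hv'
  have hneg : -(μ * ‖a‖ * ‖b‖) ≤ (inner ℝ a b : ℝ) := neg_le_of_abs_le hinner
  have hcs : 2 * (‖a‖ * ‖b‖) ≤ ‖a‖ ^ 2 + ‖b‖ ^ 2 := by nlinarith [sq_nonneg (‖a‖ - ‖b‖)]
  have key : (1 - μ) * (‖a‖ ^ 2 + ‖b‖ ^ 2) ≤ ‖a + b‖ ^ 2 := by
    rw [hexp]; nlinarith [norm_nonneg a, norm_nonneg b]
  rw [← le_div_iff₀' h1μ] at key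
  calc ‖a‖ ^ 2 + ‖b‖ ^ 2 ≤ ‖a + b‖ ^ 2 / (1 - μ) := key
    _ = 1 / (1 - μ) * ‖a + b‖ ^ 2 := by ring
end
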